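/- Let Γ ↷ (X,ν) be a measurable measure-class-preserving action of a countable discrete group on a σ-finite measure space, Y ⊆ X a domain, and S ⊆ Γ a finite symmetric subset containing the identity. Suppose there is a constant Θ ≥ 1 such that 1/Θ ≤ r(s,x) ≤ Θ for every x ∈ Y and every s ∈ S with s·x ∈ Y. Then Y is a domain of S-expansion if and only if Y is a domain of Markov S-expansion, i.e. the Cheeger constant of the normalised local Markov kernel Π_{Y,S} with respect to ν̃_{Y,S} is strictly positive. -/

import Mathlib

open MeasureTheory ENNReal Filter
open scoped Classical

noncomputable section

/-- The Radon–Nikodym derivative `r(γ,x) = d(γ⁻¹_*ν)/dν (x)` of a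
measure-class-preserving action. -/
def rnd {Γ X : Type*} [Group Γ] [MulAction Γ X] [MeasurableSpace X]
    (ν : Measure X) (γ : Γ) (x : X) : ℝ≥0∞ :=
  Measure.rnDeriv (ν.map (fun y => γ⁻¹ • y)) ν x

/-- `σ_{Y,S}(x) = Σ_{s ∈ S, s·x ∈ Y} r(s,x)^{1/2}`. -/
def sigmaLoc {Γ X : Type*} [Group Γ] [MulAction Γ X] [MeasurableSpace X]
    (ν : Measure X) (S : Finset Γ) (Y : Set X) (x : X) : ℝ≥0∞ :=
  ∑ s ∈ S, if s • x ∈ Y then (rnd ν s x) ^ (1/2 : ℝ) else 0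

/-- The measure `ν̃_{Y,S}`, given by `dν̃_{Y,S} = σ_{Y,S} · d(ν|_Y)`. -/
def nuT {Γ X : Type*} [Group Γ] [MulAction Γ X] [MeasurableSpace X]
    (ν : Measure X) (S : Finset Γ) (Y : Set X) : Measure X :=
  (ν.restrict Y).withDensity (sigmaLoc ν S Y)

/-- The normalised local Markov kernel
`Π_{Y,S}(x,·) = (1/σ_{Y,S}(x)) Σ_{s ∈ S, s·x ∈ Y} r(s,x)^{1/2} δ_{s·x}`. -/
def locKer {Γ X : Type*} [Group Γ] [MulAction Γ X] [MeasurableSpace X]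
    (ν : Measure X) (S : Finset Γ) (Y : Set X) (x : X) : Measure X :=
  (sigmaLoc ν S Y x)⁻¹ •
    ∑ s ∈ S, (if s • x ∈ Y then (rnd ν s x) ^ (1/2 : ℝ) else 0) • Measure.dirac (s • x)

/-- The `ν̃_{Y,S}`-size of the boundary of `A ⊆ Y` with respect to `Π_{Y,S}`:
`|∂ A| = ∫_A Π_{Y,S}(x, Y∖A) dν̃_{Y,S}(x)`. -/
def mkBdry {Γ X : Type*} [Group Γ] [MulAction Γ X] [MeasurableSpace X]
    (ν : Measure X) (S : Finset Γ) (Y A : Set X) : ℝ≥0∞ :=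
  ∫⁻ x in A, locKer ν S Y x (Y \ A) ∂(nuT ν S Y)

/-- `Y` is a domain of Markov `S`-expansion: the Cheeger constant of the normalised local
Markov kernel `Π_{Y,S}` with respect to its reversing measure `ν̃_{Y,S}` is strictly
positive. -/
def MarkovSExpansion {Γ X : Type*} [Group Γ] [MulAction Γ X] [MeasurableSpace X]
    (ν : Measure X) (S : Finset Γ) (Y : Set X) : Prop :=
  0 < sInf { q : ℝ≥0∞ | ∃ A : Set X, MeasurableSet A ∧ A ⊆ Y ∧ 0 < nuT ν S Y A ∧
    nuT ν S Y A ≤ nuT ν S Y Y / 2 ∧ q = mkBdry ν S Y A / nuT ν S Y A }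

/-- `Y` is a domain of `S`-expansion: there is `c > 0` such that every measurable
`A ⊆ Y` with `0 < ν(A) ≤ ν(Y)/2` satisfies `ν((S·A) ∩ Y) > (1+c)·ν(A)`. -/
def DomainSExpansion {Γ X : Type*} [Group Γ] [MulAction Γ X] [MeasurableSpace X]
    (ν : Measure X) (S : Finset Γ) (Y : Set X) : Prop :=
  ∃ c : ℝ, 0 < c ∧ ∀ A : Set X, MeasurableSet A → A ⊆ Y → 0 < ν A → ν A ≤ ν Y / 2 →
    (1 + ENNReal.ofReal c) * ν A < ν ((⋃ s ∈ S, (fun x => s • x) '' A) ∩ Y)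

section Aux

set_option linter.unusedSectionVars false

variable {Γ X : Type*} [Group Γ] [MulAction Γ X] [MeasurableSpace X]

/-- The action of `γ` as a measurable equivalence. -/
def smulEquiv (hmeas : ∀ γ : Γ, Measurable (fun x : X => γ • x)) (γ : Γ) : X ≃ᵐ X where
  toEquiv := MulAction.toPerm γ
  measurable_toFun := hmeas γ
  measurable_invFun := hmeas γ⁻¹

lemma image_smul_eq_preimage (γ : Γ) (C : Set X) :
    (fun x => γ • x) '' C = (fun x : X => γ⁻¹ • x) ⁻¹' C := by
  ext x
  constructor
  · rintro ⟨y, hy, rfl⟩; simpa [inv_smul_smul] using hy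
  · intro hx; exact ⟨γ⁻¹ • x, hx, smul_inv_smul _ _⟩

lemma meas_image_eq (ν : Measure X) [SigmaFinite ν]
    (hmeas : ∀ γ : Γ, Measurable (fun x : X => γ • x))
    (hmcp : ∀ γ : Γ, Measure.QuasiMeasurePreserving (fun x : X => γ • x) ν ν)
    (s : Γ) {C : Set X} (hC : MeasurableSet C) :
    ν ((fun x => s • x) '' C) = ∫⁻ x in C, rnd ν s x ∂ν := by
  haveI hSF : SigmaFinite (ν.map (fun x : X => s⁻¹ • x)) := by
    have h : ν.map (fun x : X => s⁻¹ • x) = ν.map (smulEquiv hmeas s⁻¹) := rfl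
    rw [h]
    exact (smulEquiv hmeas s⁻¹).sigmaFinite_map
  have hac : ν.map (fun x : X => s⁻¹ • x) ≪ ν := (hmcp s⁻¹).absolutelyContinuous
  rw [image_smul_eq_preimage, ← Measure.map_apply (hmeas s⁻¹) hC]
  simp only [rnd]
  exact (Measure.setLIntegral_rnDeriv hac C).symm

lemma setLIntegral_le_const_mul (ν : Measure X) {f : X → ℝ≥0∞} {A : Set X}
    (hA : MeasurableSet A) {c : ℝ≥0∞} (h : ∀ x ∈ A, f x ≤ c) :
    ∫⁻ x in A, f x ∂ν ≤ c * ν A := by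
  calc ∫⁻ x in A, f x ∂ν ≤ ∫⁻ _ in A, c ∂ν :=
        lintegral_mono_ae ((ae_restrict_iff' hA).2 (ae_of_all _ h))
  _ = c * ν A := setLIntegral_const _ _

lemma const_mul_le_setLIntegral (ν : Measure X) {f : X → ℝ≥0∞} {A : Set X}
    (hA : MeasurableSet A) {c : ℝ≥0∞} (h : ∀ x ∈ A, c ≤ f x) :
    c * ν A ≤ ∫⁻ x in A, f x ∂ν := by
  calc c * ν A = ∫⁻ _ in A, c ∂ν := (setLIntegral_const _ _).symm
  _ ≤ ∫⁻ x in A, f x ∂ν := lintegral_mono_ae ((ae_restrict_iff' hA).2 (ae_of_all _ h))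

lemma locKer_apply (ν : Measure X) (S : Finset Γ) (Y A : Set X)
    (hYA : MeasurableSet (Y \ A)) (x : X) :
    locKer ν S Y x (Y \ A)
      = (sigmaLoc ν S Y x)⁻¹ *
        ∑ s ∈ S, (if s • x ∈ Y \ A then rnd ν s x ^ (1/2 : ℝ) else 0) := by
  rw [locKer, Measure.smul_apply, Measure.finset_sum_apply, smul_eq_mul]
  congr 1
  refine Finset.sum_congr rfl fun s _ => ?_
  rw [Measure.smul_apply, Measure.dirac_apply' _ hYA, smul_eq_mul]
  by_cases h1 : s • x ∈ Y
  · by_cases h2 : s • x ∈ Y \ A <;> simp [h1, h2, Set.indicator_apply]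
  · have h2 : s • x ∉ Y \ A := fun h => h1 h.1
    simp [h1, h2]

lemma mkBdry_eq (ν : Measure X) (hmeas : ∀ γ : Γ, Measurable (fun x : X => γ • x))
    (S : Finset Γ) {Y A : Set X} (hY : MeasurableSet Y) (hA : MeasurableSet A)
    (hAY : A ⊆ Y)
    (hσ0 : ∀ x ∈ Y, sigmaLoc ν S Y x ≠ 0)
    (hσt : ∀ x ∈ Y, sigmaLoc ν S Y x ≠ ⊤) :
    mkBdry ν S Y A
      = ∑ s ∈ S, ∫⁻ x in A, (if s • x ∈ Y \ A then rnd ν s x ^ (1/2 : ℝ) else 0) ∂ν := by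
  have hYA : MeasurableSet (Y \ A) := hY.diff hA
  have hσ : Measurable (sigmaLoc ν S Y) := by
    refine Finset.measurable_sum _ fun s _ => Measurable.ite ((hmeas s) hY) ?_ measurable_const
    exact ENNReal.continuous_rpow_const.measurable.comp (Measure.measurable_rnDeriv _ _)
  have hterm : ∀ s ∈ S,
      Measurable (fun x => (if s • x ∈ Y \ A then rnd ν s x ^ (1/2 : ℝ) else 0)) := by
    intro s _
    refine Measurable.ite ((hmeas s) hYA) ?_ measurable_const
    exact ENNReal.continuous_rpow_const.measurable.comp (Measure.measurable_rnDeriv _ _)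
  have hT : Measurable
      (fun x => ∑ s ∈ S, (if s • x ∈ Y \ A then rnd ν s x ^ (1/2 : ℝ) else 0)) :=
    Finset.measurable_sum _ hterm
  have h1 : mkBdry ν S Y A
      = ∫⁻ x in A, (sigmaLoc ν S Y x)⁻¹ *
          ∑ s ∈ S, (if s • x ∈ Y \ A then rnd ν s x ^ (1/2 : ℝ) else 0) ∂(nuT ν S Y) := by
    rw [mkBdry]
    congr 1
    funext x
    exact locKer_apply ν S Y A hYA x
  rw [h1, nuT, restrict_withDensity hA, Measure.restrict_restrict hA,
    Set.inter_eq_self_of_subset_left hAY,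
    lintegral_withDensity_eq_lintegral_mul _ hσ (show Measurable (fun x => (sigmaLoc ν S Y x)⁻¹ *
      ∑ s ∈ S, (if s • x ∈ Y \ A then rnd ν s x ^ (1/2 : ℝ) else 0)) from hσ.inv.mul hT)]
  have h2 : ∀ x ∈ A, (sigmaLoc ν S Y * fun x =>
      (sigmaLoc ν S Y x)⁻¹ * ∑ s ∈ S, (if s • x ∈ Y \ A then rnd ν s x ^ (1/2 : ℝ) else 0)) x
      = ∑ s ∈ S, (if s • x ∈ Y \ A then rnd ν s x ^ (1/2 : ℝ) else 0) := by
    intro x hx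
    simp only [Pi.mul_apply]
    rw [← mul_assoc, ENNReal.mul_inv_cancel (hσ0 x (hAY hx)) (hσt x (hAY hx)), one_mul]
  rw [setLIntegral_congr_fun hA h2, lintegral_finset_sum _ hterm]

end Aux

/-- **Lemma 3.19.** Suppose the Radon–Nikodym derivatives `r(s,·)` are
bounded between `1/Θ` and `Θ` on the relevant part of the domain `Y`. Then `Y` is a
domain of `S`-expansion if and only if `Y` is a domain of Markov `S`-expansion. -/
theorem domainSExpansion_iff_markovSExpansion {Γ X : Type*} [Group Γ] [Countable Γ]
    [MulAction Γ X] [MeasurableSpace X] (ν : Measure X) [SigmaFinite ν]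
    (hmeas : ∀ γ : Γ, Measurable (fun x : X => γ • x))
    (hmcp : ∀ γ : Γ, Measure.QuasiMeasurePreserving (fun x : X => γ • x) ν ν)
    (S : Finset Γ) (hsymm : ∀ s ∈ S, s⁻¹ ∈ S) (hone : (1 : Γ) ∈ S)
    (Y : Set X) (hY : MeasurableSet Y) (hYpos : 0 < ν Y) (hYfin : ν Y < ⊤)
    (Θ : ℝ) (hΘ : 1 ≤ Θ)
    (hbound : ∀ x ∈ Y, ∀ s ∈ S, s • x ∈ Y →
      ENNReal.ofReal (1 / Θ) ≤ rnd ν s x ∧ rnd ν s x ≤ ENNReal.ofReal Θ) :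
    DomainSExpansion ν S Y ↔ MarkovSExpansion ν S Y := by
  have hΘ0 : (0:ℝ) < Θ := lt_of_lt_of_le one_pos hΘ
  set l : ℝ≥0∞ := ENNReal.ofReal (1/Θ) ^ (1/2 : ℝ) with hldef
  set u : ℝ≥0∞ := ENNReal.ofReal Θ ^ (1/2 : ℝ) with hudef
  have hl0 : l ≠ 0 :=
    (ENNReal.rpow_pos (ENNReal.ofReal_pos.2 (by positivity)) ENNReal.ofReal_ne_top).ne'
  have hlt : l ≠ ⊤ := ENNReal.rpow_ne_top_of_nonneg (by norm_num) ENNReal.ofReal_ne_top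
  have hu0 : u ≠ 0 := (ENNReal.rpow_pos (ENNReal.ofReal_pos.2 hΘ0) ENNReal.ofReal_ne_top).ne'
  have hut : u ≠ ⊤ := ENNReal.rpow_ne_top_of_nonneg (by norm_num) ENNReal.ofReal_ne_top
  have hΘmul : ENNReal.ofReal Θ * ENNReal.ofReal (1/Θ) = 1 := by
    rw [← ENNReal.ofReal_mul hΘ0.le, mul_one_div_cancel hΘ0.ne', ENNReal.ofReal_one]
  have hΘ1 : (1:ℝ≥0∞) ≤ ENNReal.ofReal Θ := ENNReal.one_le_ofReal.2 hΘ
  have hΘt : ENNReal.ofReal Θ ≠ ⊤ := ENNReal.ofReal_ne_top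
  have hΘ0' : ENNReal.ofReal Θ ≠ 0 := (ENNReal.ofReal_pos.2 hΘ0).ne'
  have hcard0 : (S.card : ℝ≥0∞) ≠ 0 := by
    exact_mod_cast Finset.card_ne_zero_of_mem hone
  have hcardt : (S.card : ℝ≥0∞) ≠ ⊤ := ENNReal.natCast_ne_top _
  set D : ℝ≥0∞ := (S.card : ℝ≥0∞) * u * ENNReal.ofReal Θ with hD
  have hD0 : D ≠ 0 := mul_ne_zero (mul_ne_zero hcard0 hu0) hΘ0'
  have hDt : D ≠ ⊤ := ENNReal.mul_ne_top (ENNReal.mul_ne_top hcardt hut) hΘt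
  -- bounds on sigmaLoc
  have hσl : ∀ x ∈ Y, l ≤ sigmaLoc ν S Y x := by
    intro x hx
    have h1 : (1:Γ) • x ∈ Y := by simpa [one_smul] using hx
    calc l ≤ rnd ν (1:Γ) x ^ (1/2:ℝ) := by
          rw [hldef]
          exact ENNReal.rpow_le_rpow (hbound x hx 1 hone h1).1 (by norm_num)
    _ = if (1:Γ) • x ∈ Y then rnd ν (1:Γ) x ^ (1/2:ℝ) else 0 := by rw [if_pos h1]
    _ ≤ sigmaLoc ν S Y x :=
          Finset.single_le_sum (f := fun s => if s • x ∈ Y then rnd ν s x ^ (1/2:ℝ) else 0)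
            (fun s _ => zero_le) hone
  have hσu : ∀ x ∈ Y, sigmaLoc ν S Y x ≤ (S.card : ℝ≥0∞) * u := by
    intro x hx
    have h := Finset.sum_le_card_nsmul S
      (fun s => if s • x ∈ Y then rnd ν s x ^ (1/2:ℝ) else 0) u (fun s hs => by
        show (if s • x ∈ Y then rnd ν s x ^ (1/2:ℝ) else 0) ≤ u
        by_cases h : s • x ∈ Y
        · rw [if_pos h, hudef]
          exact ENNReal.rpow_le_rpow (hbound x hx s hs h).2 (by norm_num : (0:ℝ) ≤ 1/2)
        · rw [if_neg h]; exact zero_le)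
    simpa [sigmaLoc, nsmul_eq_mul] using h
  have hσ0 : ∀ x ∈ Y, sigmaLoc ν S Y x ≠ 0 := by
    intro x hx
    exact (lt_of_lt_of_le (pos_iff_ne_zero.2 hl0) (hσl x hx)).ne'
  have hσt' : ∀ x ∈ Y, sigmaLoc ν S Y x ≠ ⊤ := by
    intro x hx
    exact ne_top_of_le_ne_top (ENNReal.mul_ne_top hcardt hut) (hσu x hx)
  -- bounds on nuT
  have hnuT_eq : ∀ A : Set X, MeasurableSet A → A ⊆ Y →
      nuT ν S Y A = ∫⁻ x in A, sigmaLoc ν S Y x ∂ν := by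
    intro A hA hAY
    rw [nuT, withDensity_apply _ hA, Measure.restrict_restrict hA,
      Set.inter_eq_self_of_subset_left hAY]
  have hnuT_le : ∀ A : Set X, MeasurableSet A → A ⊆ Y →
      nuT ν S Y A ≤ (S.card : ℝ≥0∞) * u * ν A := by
    intro A hA hAY
    rw [hnuT_eq A hA hAY]
    exact setLIntegral_le_const_mul ν hA (fun x hx => hσu x (hAY hx))
  have hnuT_ge : ∀ A : Set X, MeasurableSet A → A ⊆ Y → l * ν A ≤ nuT ν S Y A := by
    intro A hA hAY
    rw [hnuT_eq A hA hAY]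
    exact const_mul_le_setLIntegral ν hA (fun x hx => hσl x (hAY hx))
  have hνY_ne : ν Y ≠ ⊤ := hYfin.ne
  have hTY_ne : nuT ν S Y Y ≠ ⊤ :=
    ne_top_of_le_ne_top (ENNReal.mul_ne_top (ENNReal.mul_ne_top hcardt hut) hνY_ne)
      (hnuT_le Y hY subset_rfl)
  -- bounds on mkBdry
  have hmk_le : ∀ A : Set X, MeasurableSet A → A ⊆ Y →
      mkBdry ν S Y A ≤ u * ∑ s ∈ S, ν (A ∩ (fun x => s • x) ⁻¹' (Y \ A)) := by
    intro A hA hAY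
    rw [mkBdry_eq ν hmeas S hY hA hAY hσ0 hσt', Finset.mul_sum]
    refine Finset.sum_le_sum fun s hs => ?_
    have hP : MeasurableSet ((fun x => s • x) ⁻¹' (Y \ A)) := (hmeas s) (hY.diff hA)
    calc ∫⁻ x in A, (if s • x ∈ Y \ A then rnd ν s x ^ (1/2:ℝ) else 0) ∂ν
        ≤ ∫⁻ x in A, ((fun x => s • x) ⁻¹' (Y \ A)).indicator (fun _ => u) x ∂ν := by
          refine lintegral_mono_ae ((ae_restrict_iff' hA).2 (ae_of_all _ fun x hx => ?_))
          by_cases h : s • x ∈ Y \ A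
          · rw [if_pos h, Set.indicator_of_mem (by exact h)]
            exact ENNReal.rpow_le_rpow (hbound x (hAY hx) s hs h.1).2 (by norm_num)
          · rw [if_neg h]; exact zero_le
    _ = u * ν (A ∩ (fun x => s • x) ⁻¹' (Y \ A)) := by
          rw [lintegral_indicator hP, setLIntegral_const, Measure.restrict_apply hP,
            Set.inter_comm]
  have hmk_ge : ∀ A : Set X, MeasurableSet A → A ⊆ Y →
      l * ∑ s ∈ S, ν (A ∩ (fun x => s • x) ⁻¹' (Y \ A)) ≤ mkBdry ν S Y A := by
    intro A hA hAY
    rw [mkBdry_eq ν hmeas S hY hA hAY hσ0 hσt', Finset.mul_sum]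
    refine Finset.sum_le_sum fun s hs => ?_
    have hP : MeasurableSet ((fun x => s • x) ⁻¹' (Y \ A)) := (hmeas s) (hY.diff hA)
    calc l * ν (A ∩ (fun x => s • x) ⁻¹' (Y \ A))
        = ∫⁻ x in A, ((fun x => s • x) ⁻¹' (Y \ A)).indicator (fun _ => l) x ∂ν := by
          rw [lintegral_indicator hP, setLIntegral_const, Measure.restrict_apply hP,
            Set.inter_comm]
    _ ≤ ∫⁻ x in A, (if s • x ∈ Y \ A then rnd ν s x ^ (1/2:ℝ) else 0) ∂ν := by
          refine lintegral_mono_ae ((ae_restrict_iff' hA).2 (ae_of_all _ fun x hx => ?_))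
          by_cases h : s • x ∈ Y \ A
          · rw [if_pos h, Set.indicator_of_mem (by exact h)]
            exact ENNReal.rpow_le_rpow (hbound x (hAY hx) s hs h.1).1 (by norm_num)
          · rw [if_neg h, Set.indicator_of_notMem (by exact h)]
  -- symmetry of S
  have hmemiff : ∀ s : Γ, s ∈ S ↔ s⁻¹ ∈ S :=
    fun s => ⟨hsymm s, fun h => by simpa using hsymm _ h⟩
  have hsum_inv : ∀ f : Γ → ℝ≥0∞, ∑ s ∈ S, f s⁻¹ = ∑ s ∈ S, f s := by
    intro f
    exact Finset.sum_equiv (Equiv.inv Γ) (fun i => hmemiff i) (fun i _ => rfl)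
  -- boundary additivity
  have habdry : ∀ A : Set X, MeasurableSet A → A ⊆ Y →
      ν ((⋃ s ∈ S, (fun x => s • x) '' A) ∩ Y)
        = ν A + ν ((⋃ s ∈ S, (fun x => s • x) '' A) ∩ (Y \ A)) := by
    intro A hA hAY
    have hsub : A ⊆ (⋃ s ∈ S, (fun x => s • x) '' A) ∩ Y := by
      intro x hx
      exact ⟨Set.mem_iUnion₂.2 ⟨1, hone, ⟨x, hx, one_smul Γ x⟩⟩, hAY hx⟩
    have h1 : ((⋃ s ∈ S, (fun x => s • x) '' A) ∩ Y) \ A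
        = (⋃ s ∈ S, (fun x => s • x) '' A) ∩ (Y \ A) := Set.inter_diff_assoc _ _ _
    rw [← h1]
    have h2 := measure_add_diff (μ := ν) hA.nullMeasurableSet
      ((⋃ s ∈ S, (fun x => s • x) '' A) ∩ Y)
    rw [Set.union_eq_self_of_subset_left hsub] at h2
    exact h2.symm
  -- claim I
  have hclaimI : ∀ A : Set X, MeasurableSet A → A ⊆ Y →
      ν ((⋃ s ∈ S, (fun x => s • x) '' A) ∩ (Y \ A))
        ≤ ENNReal.ofReal Θ * ∑ s ∈ S, ν (A ∩ (fun x => s • x) ⁻¹' (Y \ A)) := by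
    intro A hA hAY
    have h1 : (⋃ s ∈ S, (fun x => s • x) '' A) ∩ (Y \ A)
        = ⋃ s ∈ S, ((fun x => s • x) '' A ∩ (Y \ A)) := Set.iUnion₂_inter _ _
    rw [h1, Finset.mul_sum]
    refine (measure_biUnion_finset_le S _).trans (Finset.sum_le_sum fun s hs => ?_)
    have hC : MeasurableSet (A ∩ (fun x => s • x) ⁻¹' (Y \ A)) :=
      hA.inter ((hmeas s) (hY.diff hA))
    have him : (fun x => s • x) '' (A ∩ (fun x => s • x) ⁻¹' (Y \ A))
        = (fun x => s • x) '' A ∩ (Y \ A) := Set.image_inter_preimage _ _ _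
    rw [← him, meas_image_eq ν hmeas hmcp s hC]
    exact setLIntegral_le_const_mul ν hC (fun x hx => (hbound x (hAY hx.1) s hs hx.2.1).2)
  -- claim IV
  have hclaimIV : ∀ A : Set X, MeasurableSet A → A ⊆ Y →
      ∑ s ∈ S, ν (A ∩ (fun x => s • x) ⁻¹' (Y \ A))
        ≤ ENNReal.ofReal Θ * (S.card : ℝ≥0∞) *
            ν ((⋃ s ∈ S, (fun x => s • x) '' A) ∩ (Y \ A)) := by
    intro A hA hAY
    have hstep : ∀ s ∈ S, ν (A ∩ (fun x => s • x) ⁻¹' (Y \ A))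
        ≤ ENNReal.ofReal Θ * ν ((⋃ s ∈ S, (fun x => s • x) '' A) ∩ (Y \ A)) := by
      intro s hs
      have hC : MeasurableSet (A ∩ (fun x => s • x) ⁻¹' (Y \ A)) :=
        hA.inter ((hmeas s) (hY.diff hA))
      have hlow : ENNReal.ofReal (1/Θ) * ν (A ∩ (fun x => s • x) ⁻¹' (Y \ A))
          ≤ ν ((fun x => s • x) '' A ∩ (Y \ A)) := by
        rw [← Set.image_inter_preimage, meas_image_eq ν hmeas hmcp s hC]
        exact const_mul_le_setLIntegral ν hC (fun x hx => (hbound x (hAY hx.1) s hs hx.2.1).1)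
      have hmono : ν ((fun x => s • x) '' A ∩ (Y \ A))
          ≤ ν ((⋃ s ∈ S, (fun x => s • x) '' A) ∩ (Y \ A)) :=
        measure_mono (Set.inter_subset_inter_left _
          (fun y hy => Set.mem_iUnion₂.2 ⟨s, hs, hy⟩))
      calc ν (A ∩ (fun x => s • x) ⁻¹' (Y \ A))
          = ENNReal.ofReal Θ * (ENNReal.ofReal (1/Θ) * ν (A ∩ (fun x => s • x) ⁻¹' (Y \ A))) := by
            rw [← mul_assoc, hΘmul, one_mul]
      _ ≤ ENNReal.ofReal Θ * ν ((⋃ s ∈ S, (fun x => s • x) '' A) ∩ (Y \ A)) :=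
            mul_le_mul_right (hlow.trans hmono) _
    calc ∑ s ∈ S, ν (A ∩ (fun x => s • x) ⁻¹' (Y \ A))
        ≤ S.card • (ENNReal.ofReal Θ * ν ((⋃ s ∈ S, (fun x => s • x) '' A) ∩ (Y \ A))) :=
          Finset.sum_le_card_nsmul _ _ _ hstep
    _ = ENNReal.ofReal Θ * (S.card : ℝ≥0∞) *
          ν ((⋃ s ∈ S, (fun x => s • x) '' A) ∩ (Y \ A)) := by
          rw [nsmul_eq_mul]; ring
  -- claim II
  have hclaimII : ∀ A : Set X, MeasurableSet A → A ⊆ Y →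
      ∑ s ∈ S, ν ((Y \ A) ∩ (fun x => s • x) ⁻¹' A)
        ≤ (S.card : ℝ≥0∞) * ν ((⋃ s ∈ S, (fun x => s • x) '' A) ∩ (Y \ A)) := by
    intro A hA hAY
    have hstep : ∀ s ∈ S, ν ((Y \ A) ∩ (fun x => s • x) ⁻¹' A)
        ≤ ν ((⋃ s ∈ S, (fun x => s • x) '' A) ∩ (Y \ A)) := by
      intro s hs
      refine measure_mono fun x hx => ⟨?_, hx.1⟩
      exact Set.mem_iUnion₂.2 ⟨s⁻¹, hsymm s hs, ⟨s • x, hx.2, inv_smul_smul s x⟩⟩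
    calc ∑ s ∈ S, ν ((Y \ A) ∩ (fun x => s • x) ⁻¹' A)
        ≤ S.card • ν ((⋃ s ∈ S, (fun x => s • x) '' A) ∩ (Y \ A)) :=
          Finset.sum_le_card_nsmul _ _ _ hstep
    _ = (S.card : ℝ≥0∞) * ν ((⋃ s ∈ S, (fun x => s • x) '' A) ∩ (Y \ A)) := nsmul_eq_mul _ _
  -- claim III
  have hclaimIII : ∀ A B : Set X,
      ν ((⋃ s ∈ S, (fun x => s • x) '' B) ∩ A) ≤ ∑ s ∈ S, ν (A ∩ (fun x => s • x) ⁻¹' B) := by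
    intro A B
    have h1 : (⋃ s ∈ S, (fun x => s • x) '' B) ∩ A
        = ⋃ s ∈ S, ((fun x => s • x) '' B ∩ A) := Set.iUnion₂_inter _ _
    calc ν ((⋃ s ∈ S, (fun x => s • x) '' B) ∩ A)
        ≤ ∑ s ∈ S, ν ((fun x => s • x) '' B ∩ A) := h1 ▸ measure_biUnion_finset_le S _
    _ = ∑ s ∈ S, ν (A ∩ (fun x => s⁻¹ • x) ⁻¹' B) := by
        refine Finset.sum_congr rfl fun s _ => ?_
        rw [image_smul_eq_preimage, Set.inter_comm]
    _ = ∑ s ∈ S, ν (A ∩ (fun x => s • x) ⁻¹' B) :=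
        hsum_inv (fun s => ν (A ∩ (fun x => s • x) ⁻¹' B))
  -- halving helpers
  have hhalf1 : ∀ a b t : ℝ≥0∞, a + b = t → t ≠ ⊤ → a ≤ t/2 → a ≤ b := by
    intro a b t habt ht ha
    have hb : t/2 ≤ b := by
      rw [← ENNReal.sub_half ht]
      refine tsub_le_iff_right.2 ?_
      calc t = a + b := habt.symm
      _ ≤ t/2 + b := add_le_add_left ha b
      _ = b + t/2 := add_comm _ _
    exact ha.trans hb
  have hhalf2 : ∀ a b t : ℝ≥0∞, a + b = t → t ≠ ⊤ → ¬(a ≤ t/2) → b ≤ t/2 := by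
    intro a b t habt ht ha
    by_contra hb
    push_neg at ha hb
    have : t < t := by
      calc t = t/2 + t/2 := (ENNReal.add_halves t).symm
      _ < a + b := ENNReal.add_lt_add ha hb
      _ = t := habt
    exact absurd this (lt_irrefl t)
  have hadd : ∀ A : Set X, MeasurableSet A → A ⊆ Y → ν A + ν (Y \ A) = ν Y := by
    intro A hA hAY
    rw [measure_add_diff hA.nullMeasurableSet Y, Set.union_eq_self_of_subset_left hAY]
  have haddT : ∀ A : Set X, MeasurableSet A → A ⊆ Y →
      nuT ν S Y A + nuT ν S Y (Y \ A) = nuT ν S Y Y := by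
    intro A hA hAY
    rw [measure_add_diff hA.nullMeasurableSet Y, Set.union_eq_self_of_subset_left hAY]
  constructor
  · -- Domain expansion → Markov expansion
    rintro ⟨c, hc, hexp⟩
    have hc0 : ENNReal.ofReal c ≠ 0 := (ENNReal.ofReal_pos.2 hc).ne'
    have hε0 : (0:ℝ≥0∞) < l * ENNReal.ofReal c / D :=
      ENNReal.div_pos (mul_ne_zero hl0 hc0) hDt
    refine lt_of_lt_of_le hε0 (le_sInf ?_)
    rintro q ⟨A, hA, hAY, hTpos, hThalf, rfl⟩
    have hνA_ne : ν A ≠ ⊤ := ((measure_mono hAY).trans_lt hYfin).ne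
    have hTA_ne : nuT ν S Y A ≠ ⊤ := ne_top_of_le_ne_top hTY_ne (measure_mono hAY)
    have hνA_pos : 0 < ν A := by
      by_contra h
      push_neg at h
      have h0 : ν A = 0 := le_antisymm h (zero_le)
      have h2 := hnuT_le A hA hAY
      rw [h0, mul_zero] at h2
      exact absurd (le_antisymm h2 (zero_le)) hTpos.ne'
    rw [ENNReal.le_div_iff_mul_le (Or.inl hTpos.ne') (Or.inl hTA_ne)]
    have heq : l * ENNReal.ofReal c / D * nuT ν S Y A
        = l * ENNReal.ofReal c * nuT ν S Y A / D := by
      rw [div_eq_mul_inv, div_eq_mul_inv]; ring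
    rw [heq, ENNReal.div_le_iff_le_mul (Or.inl hD0) (Or.inl hDt)]
    by_cases hcase : ν A ≤ ν Y / 2
    · have hbdry := hexp A hA hAY hνA_pos hcase
      rw [habdry A hA hAY, add_mul, one_mul] at hbdry
      have hb2 : ENNReal.ofReal c * ν A
          < ν ((⋃ s ∈ S, (fun x => s • x) '' A) ∩ (Y \ A)) :=
        (ENNReal.add_lt_add_iff_left hνA_ne).1 hbdry
      calc l * ENNReal.ofReal c * nuT ν S Y A
          ≤ l * ENNReal.ofReal c * ((S.card:ℝ≥0∞) * u * ν A) :=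
            mul_le_mul_right (hnuT_le A hA hAY) _
      _ = (S.card:ℝ≥0∞) * u * (l * (ENNReal.ofReal c * ν A)) := by ring
      _ ≤ (S.card:ℝ≥0∞) * u *
            (l * ν ((⋃ s ∈ S, (fun x => s • x) '' A) ∩ (Y \ A))) :=
            mul_le_mul_right (mul_le_mul_right hb2.le _) _
      _ ≤ (S.card:ℝ≥0∞) * u *
            (l * (ENNReal.ofReal Θ * ∑ s ∈ S, ν (A ∩ (fun x => s • x) ⁻¹' (Y \ A)))) :=
            mul_le_mul_right (mul_le_mul_right (hclaimI A hA hAY) _) _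
      _ = (l * ∑ s ∈ S, ν (A ∩ (fun x => s • x) ⁻¹' (Y \ A))) * D := by rw [hD]; ring
      _ ≤ mkBdry ν S Y A * D := mul_le_mul_left (hmk_ge A hA hAY) _
    · have hνB_half : ν (Y \ A) ≤ ν Y / 2 := hhalf2 _ _ _ (hadd A hA hAY) hνY_ne hcase
      have hTA_le_TB : nuT ν S Y A ≤ nuT ν S Y (Y \ A) :=
        hhalf1 _ _ _ (haddT A hA hAY) hTY_ne hThalf
      have hνB_pos : 0 < ν (Y \ A) := by
        by_contra h
        push_neg at h
        have h0 : ν (Y \ A) = 0 := le_antisymm h (zero_le)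
        have h2 := hnuT_le (Y \ A) (hY.diff hA) Set.diff_subset
        rw [h0, mul_zero] at h2
        exact absurd (lt_of_lt_of_le hTpos (hTA_le_TB.trans h2)) (by simp)
      have hbdry := hexp (Y \ A) (hY.diff hA) Set.diff_subset hνB_pos hνB_half
      rw [habdry (Y \ A) (hY.diff hA) Set.diff_subset, add_mul, one_mul] at hbdry
      have hνB_ne : ν (Y \ A) ≠ ⊤ := ((measure_mono Set.diff_subset).trans_lt hYfin).ne
      have hb2 : ENNReal.ofReal c * ν (Y \ A)
          < ν ((⋃ s ∈ S, (fun x => s • x) '' (Y \ A)) ∩ (Y \ (Y \ A))) :=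
        (ENNReal.add_lt_add_iff_left hνB_ne).1 hbdry
      rw [Set.diff_diff_cancel_left hAY] at hb2
      calc l * ENNReal.ofReal c * nuT ν S Y A
          ≤ l * ENNReal.ofReal c * nuT ν S Y (Y \ A) := mul_le_mul_right hTA_le_TB _
      _ ≤ l * ENNReal.ofReal c * ((S.card:ℝ≥0∞) * u * ν (Y \ A)) :=
            mul_le_mul_right (hnuT_le (Y \ A) (hY.diff hA) Set.diff_subset) _
      _ = (S.card:ℝ≥0∞) * u * (l * (ENNReal.ofReal c * ν (Y \ A))) := by ring
      _ ≤ (S.card:ℝ≥0∞) * u *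
            (l * ν ((⋃ s ∈ S, (fun x => s • x) '' (Y \ A)) ∩ A)) :=
            mul_le_mul_right (mul_le_mul_right hb2.le _) _
      _ ≤ (S.card:ℝ≥0∞) * u *
            (l * ∑ s ∈ S, ν (A ∩ (fun x => s • x) ⁻¹' (Y \ A))) :=
            mul_le_mul_right (mul_le_mul_right (hclaimIII A (Y \ A)) _) _
      _ ≤ (S.card:ℝ≥0∞) * u * mkBdry ν S Y A :=
            mul_le_mul_right (hmk_ge A hA hAY) _
      _ = mkBdry ν S Y A * ((S.card:ℝ≥0∞) * u) := by ring
      _ ≤ mkBdry ν S Y A * D := by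
            rw [hD]
            exact mul_le_mul_right (le_mul_of_one_le_right (zero_le) hΘ1) _
  · -- Markov expansion → Domain expansion
    intro hκ
    have hκ' : (0:ℝ≥0∞) < sInf { q : ℝ≥0∞ | ∃ A : Set X, MeasurableSet A ∧ A ⊆ Y ∧
        0 < nuT ν S Y A ∧ nuT ν S Y A ≤ nuT ν S Y Y / 2 ∧
        q = mkBdry ν S Y A / nuT ν S Y A } := hκ
    set κ : ℝ≥0∞ := min (sInf { q : ℝ≥0∞ | ∃ A : Set X, MeasurableSet A ∧ A ⊆ Y ∧
        0 < nuT ν S Y A ∧ nuT ν S Y A ≤ nuT ν S Y Y / 2 ∧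
        q = mkBdry ν S Y A / nuT ν S Y A }) 1 with hκdef
    have hκ0 : κ ≠ 0 := (lt_min hκ' zero_lt_one).ne'
    have hκ1 : κ ≤ 1 := min_le_right _ _
    have hκt : κ ≠ ⊤ := ne_top_of_le_ne_top one_ne_top hκ1
    set C : ℝ≥0∞ := κ * l / D with hC
    have hC0 : C ≠ 0 := (ENNReal.div_pos (mul_ne_zero hκ0 hl0) hDt).ne'
    have hCt : C ≠ ⊤ := (div_lt_top (ENNReal.mul_ne_top hκt hlt) hD0).ne
    have hC2t : C / 2 ≠ ⊤ := ne_top_of_le_ne_top hCt ENNReal.half_le_self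
    refine ⟨(C/2).toReal, ENNReal.toReal_pos (by
      simp only [ne_eq, ENNReal.div_eq_zero_iff, not_or]
      exact ⟨hC0, ENNReal.ofNat_ne_top⟩) hC2t, ?_⟩
    intro A hA hAY hνA hνhalf
    have hνA_ne : ν A ≠ ⊤ := ((measure_mono hAY).trans_lt hYfin).ne
    have hofc : ENNReal.ofReal ((C/2).toReal) < C := by
      rw [ENNReal.ofReal_toReal hC2t]
      exact ENNReal.half_lt_self hC0 hCt
    have key : C * ν A ≤ ν ((⋃ s ∈ S, (fun x => s • x) '' A) ∩ (Y \ A)) := by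
      have hconv : κ * l * ν A ≤
          ν ((⋃ s ∈ S, (fun x => s • x) '' A) ∩ (Y \ A)) * D →
          C * ν A ≤ ν ((⋃ s ∈ S, (fun x => s • x) '' A) ∩ (Y \ A)) := by
        intro h
        have heq : C * ν A = κ * l * ν A / D := by
          rw [hC, div_eq_mul_inv, div_eq_mul_inv]; ring
        rw [heq]
        exact (ENNReal.div_le_iff_le_mul (Or.inl hD0) (Or.inl hDt)).2 h
      refine hconv ?_
      by_cases hcase : nuT ν S Y A ≤ nuT ν S Y Y / 2
      · -- A itself qualifies
        have hTpos : 0 < nuT ν S Y A :=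
          lt_of_lt_of_le (ENNReal.mul_pos hl0 hνA.ne') (hnuT_ge A hA hAY)
        have hTA_ne : nuT ν S Y A ≠ ⊤ := ne_top_of_le_ne_top hTY_ne (measure_mono hAY)
        have hκle : κ * nuT ν S Y A ≤ mkBdry ν S Y A := by
          have h1 : κ ≤ mkBdry ν S Y A / nuT ν S Y A :=
            (min_le_left _ _).trans (sInf_le ⟨A, hA, hAY, hTpos, hcase, rfl⟩)
          have h2 : κ * nuT ν S Y A ≤ mkBdry ν S Y A / nuT ν S Y A * nuT ν S Y A :=
            mul_le_mul_left h1 _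
          rwa [ENNReal.div_mul_cancel hTpos.ne' hTA_ne] at h2
        calc κ * l * ν A
            ≤ κ * nuT ν S Y A := by
              rw [mul_assoc]; exact mul_le_mul_right (hnuT_ge A hA hAY) κ
        _ ≤ mkBdry ν S Y A := hκle
        _ ≤ u * ∑ s ∈ S, ν (A ∩ (fun x => s • x) ⁻¹' (Y \ A)) := hmk_le A hA hAY
        _ ≤ u * (ENNReal.ofReal Θ * (S.card : ℝ≥0∞) *
              ν ((⋃ s ∈ S, (fun x => s • x) '' A) ∩ (Y \ A))) :=
              mul_le_mul_right (hclaimIV A hA hAY) u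
        _ = ν ((⋃ s ∈ S, (fun x => s • x) '' A) ∩ (Y \ A)) * D := by rw [hD]; ring
      · -- the complement qualifies
        have hB : MeasurableSet (Y \ A) := hY.diff hA
        have hνA_le_B : ν A ≤ ν (Y \ A) := hhalf1 _ _ _ (hadd A hA hAY) hνY_ne hνhalf
        have hThalfB : nuT ν S Y (Y \ A) ≤ nuT ν S Y Y / 2 :=
          hhalf2 _ _ _ (haddT A hA hAY) hTY_ne hcase
        have hTBpos : 0 < nuT ν S Y (Y \ A) :=
          lt_of_lt_of_le (ENNReal.mul_pos hl0 (lt_of_lt_of_le hνA hνA_le_B).ne')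
            (hnuT_ge _ hB Set.diff_subset)
        have hTB_ne : nuT ν S Y (Y \ A) ≠ ⊤ :=
          ne_top_of_le_ne_top hTY_ne (measure_mono Set.diff_subset)
        have hκle : κ * nuT ν S Y (Y \ A) ≤ mkBdry ν S Y (Y \ A) := by
          have h1 : κ ≤ mkBdry ν S Y (Y \ A) / nuT ν S Y (Y \ A) :=
            (min_le_left _ _).trans
              (sInf_le ⟨Y \ A, hB, Set.diff_subset, hTBpos, hThalfB, rfl⟩)
          have h2 := mul_le_mul_left h1 (nuT ν S Y (Y \ A))
          rwa [ENNReal.div_mul_cancel hTBpos.ne' hTB_ne] at h2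
        calc κ * l * ν A
            ≤ κ * l * ν (Y \ A) := mul_le_mul_right hνA_le_B _
        _ ≤ κ * nuT ν S Y (Y \ A) := by
              rw [mul_assoc]; exact mul_le_mul_right (hnuT_ge _ hB Set.diff_subset) κ
        _ ≤ mkBdry ν S Y (Y \ A) := hκle
        _ ≤ u * ∑ s ∈ S, ν ((Y \ A) ∩ (fun x => s • x) ⁻¹' (Y \ (Y \ A))) :=
              hmk_le (Y \ A) hB Set.diff_subset
        _ = u * ∑ s ∈ S, ν ((Y \ A) ∩ (fun x => s • x) ⁻¹' A) := by
              rw [Set.diff_diff_cancel_left hAY]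
        _ ≤ u * ((S.card : ℝ≥0∞) *
              ν ((⋃ s ∈ S, (fun x => s • x) '' A) ∩ (Y \ A))) :=
              mul_le_mul_right (hclaimII A hA hAY) u
        _ = ν ((⋃ s ∈ S, (fun x => s • x) '' A) ∩ (Y \ A)) * ((S.card : ℝ≥0∞) * u) := by ring
        _ ≤ ν ((⋃ s ∈ S, (fun x => s • x) '' A) ∩ (Y \ A)) * D := by
              rw [hD]
              exact mul_le_mul_right (le_mul_of_one_le_right (zero_le) hΘ1) _
    rw [habdry A hA hAY, add_mul, one_mul]
    calc ν A + ENNReal.ofReal ((C/2).toReal) * ν A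
        < ν A + C * ν A := by
          refine (ENNReal.add_lt_add_iff_left hνA_ne).2 ?_
          exact ENNReal.mul_lt_mul_left hνA.ne' hνA_ne hofc
    _ ≤ ν A + ν ((⋃ s ∈ S, (fun x => s • x) '' A) ∩ (Y \ A)) := add_le_add_right key _
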